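/- Suppose ψ ∈ R is nonzero with D̄(ψ) = (∂F/∂u_1)·ψ, r ≥ 1, H_r = 0, and (when r > 1) H_1, …, H_{r−1} are nonzero in Frac(R). Let 𝓜 be the operator given by the Laplace factorization formula. Then 𝓜(W) is a symmetry of the equation u_{xy} = F for every x-integral W (the symmetry condition being understood in Frac(R)). -/

import Mathlib

open MvPolynomial

noncomputable section

/-- Variables of the ring R = K[x, y, u₀, u₁, …, ū₁, ū₂, …].
`Var.ubar j` denotes the variable ū_{j+1}, so that `Var.ubar 0 = ū₁`. -/
inductive Var : Type
  | x : Var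
  | y : Var
  | u : ℕ → Var
  | ubar : ℕ → Var
  deriving DecidableEq

/-- The ring R. -/
abbrev RR (K : Type*) [CommSemiring K] : Type _ := MvPolynomial Var K

variable {K : Type*} [Field K] [CharZero K]

/-- The subring 𝓕 ⊆ R of polynomials not involving any ū_j. -/
def Fcal (K : Type*) [CommSemiring K] : Subalgebra K (RR K) :=
  MvPolynomial.supported K {v : Var | ∀ j : ℕ, v ≠ Var.ubar j}

/-- The set of variables that F may involve: x, y, u₀, u₁, ū₁. -/
def Fvars : Set Var := {Var.x, Var.y, Var.u 0, Var.u 1, Var.ubar 0}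

/-- `D` and `Dbar` are the total derivatives with respect to x and y on solutions
of u_{xy} = F, i.e. the K-derivations determined by mutual recursion by
D(x) = 1, D(y) = 0, D(uᵢ) = u_{i+1}, D(ū_i) = D̄^{i-1}(F) (i ≥ 1);
D̄(y) = 1, D̄(x) = 0, D̄(u₀) = ū₁, D̄(u_i) = D^{i-1}(F) (i ≥ 1), D̄(ū_i) = ū_{i+1}.
(Recall `Var.ubar j` denotes ū_{j+1}.)  -/
structure IsTotalDerPair (F : RR K) (D Dbar : Derivation K (RR K) (RR K)) : Prop where
  hDx : D (X Var.x) = 1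
  hDy : D (X Var.y) = 0
  hDu : ∀ i : ℕ, D (X (Var.u i)) = X (Var.u (i + 1))
  hDubar : ∀ j : ℕ, D (X (Var.ubar j)) = (⇑Dbar)^[j] F
  hDbary : Dbar (X Var.y) = 1
  hDbarx : Dbar (X Var.x) = 0
  hDbaru0 : Dbar (X (Var.u 0)) = X (Var.ubar 0)
  hDbaru : ∀ i : ℕ, Dbar (X (Var.u (i + 1))) = (⇑D)^[i] F
  hDbarubar : ∀ j : ℕ, Dbar (X (Var.ubar j)) = X (Var.ubar (j + 1))

/-- `g` is a symmetry of the equation u_{xy} = F: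
D(D̄(g)) − F_{u₁}·D(g) − F_{ū₁}·D̄(g) − F_{u₀}·g = 0. -/
def IsSymmetry (F : RR K) (D Dbar : Derivation K (RR K) (RR K)) (g : RR K) : Prop :=
  D (Dbar g) - pderiv (Var.u 1) F * D g - pderiv (Var.ubar 0) F * Dbar g
    - pderiv (Var.u 0) F * g = 0

/-- The differential operator Σ_{i=0}^k ξ_i·Df^i applied to `a`. -/
def opApply {A : Type*} [CommRing A] (Df : A → A) (ξ : ℕ → A) (k : ℕ) (a : A) : A :=
  ∑ i ∈ Finset.range (k + 1), ξ i * Df^[i] a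

/-- `ξ 0, …, ξ k` are the coefficients of an x-symmetry driver of order `k`:
`ξ k ≠ 0` and Σ ξ_i·D^i maps every x-integral to a symmetry. -/
def IsDriver (F : RR K) (D Dbar : Derivation K (RR K) (RR K)) (k : ℕ) (ξ : ℕ → RR K) : Prop :=
  ξ k ≠ 0 ∧ ∀ W : RR K, Dbar W = 0 → IsSymmetry F D Dbar (opApply ⇑D ξ k W)

/-- The Fréchet derivative a_* = Σ_{i≥0} (∂a/∂uᵢ)·D^i applied to `g`. -/
def frechet (D : Derivation K (RR K) (RR K)) (a g : RR K) : RR K :=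
  ∑ᶠ i : ℕ, pderiv (Var.u i) a * (⇑D)^[i] g

/-- The Lie bracket [f, g] = g_*(f) − f_*(g). -/
def lieBracket (D : Derivation K (RR K) (RR K)) (f g : RR K) : RR K :=
  frechet D g f - frechet D f g

/-- The fraction field Frac(R). -/
abbrev FF (K : Type*) [Field K] : Type _ := FractionRing (RR K)

/-- `DF` extends the derivation `D` of R to the fraction field Frac(R). -/
def ExtendsTo (D : Derivation K (RR K) (RR K)) (DF : Derivation K (FF K) (FF K)) : Prop :=
  ∀ p : RR K, DF (algebraMap (RR K) (FF K) p) = algebraMap (RR K) (FF K) (D p)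

/-- The Laplace invariant H₁ = −D(F_{u₁}) + F_{u₁}·F_{ū₁} + F_{u₀} (computed in R). -/
def H1R (F : RR K) (D : Derivation K (RR K) (RR K)) : RR K :=
  -(D (pderiv (Var.u 1) F)) + pderiv (Var.u 1) F * pderiv (Var.ubar 0) F
    + pderiv (Var.u 0) F

/-- The Laplace invariant H₀ = −D̄(F_{ū₁}) + F_{u₁}·F_{ū₁} + F_{u₀} (computed in R). -/
def H0R (F : RR K) (Dbar : Derivation K (RR K) (RR K)) : RR K :=
  -(Dbar (pderiv (Var.ubar 0) F)) + pderiv (Var.u 1) F * pderiv (Var.ubar 0) F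
    + pderiv (Var.u 0) F

/-- The sequence of Laplace invariants in Frac(R), defined by
H_{i+1} = 2H_i − H_{i−1} − D(D̄(H_i)/H_i) (whenever H_i ≠ 0; division is the field
division of Frac(R)). -/
def Hseq (Df Dbarf : FF K → FF K) (H0 H1 : FF K) : ℕ → FF K
  | 0 => H0
  | 1 => H1
  | (n + 2) =>
      2 * Hseq Df Dbarf H0 H1 (n + 1) - Hseq Df Dbarf H0 H1 n
        - Df (Dbarf (Hseq Df Dbarf H0 H1 (n + 1)) / Hseq Df Dbarf H0 H1 (n + 1))

/-- Auxiliary composition: `lapAux Df c H j g` is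
(1/H₁)(D − c) ∘ (1/H₂)(D − c) ∘ ⋯ ∘ (1/H_j)(D − c) ∘ g. -/
def lapAux (Df : FF K → FF K) (c : FF K) (H : ℕ → FF K) : ℕ → (FF K → FF K) → FF K → FF K
  | 0, g, a => g a
  | (j + 1), g, a => lapAux Df c H j (fun b => (Df (g b) - c * g b) / H (j + 1)) a

/-- The Laplace factorization formula: for r > 1,
𝓜 = (1/H₁)(D − F_{ū₁}) ∘ ⋯ ∘ (1/H_{r−1})(D − F_{ū₁}) ∘ (H_{r−1}⋯H₁·ψ ·);
for r = 1, 𝓜 is multiplication by ψ. -/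
def lapM (Df : FF K → FF K) (c : FF K) (H : ℕ → FF K) (ψ : FF K) (r : ℕ) : FF K → FF K :=
  lapAux Df c H (r - 1) (fun a => (∏ i ∈ Finset.Icc 1 (r - 1), H i) * ψ * a)

/-- The symmetry condition, understood in Frac(R). -/
def IsSymmetryFF (F : RR K) (DF DbarF : Derivation K (FF K) (FF K)) (g : FF K) : Prop :=
  DF (DbarF g) - algebraMap (RR K) (FF K) (pderiv (Var.u 1) F) * DF g
    - algebraMap (RR K) (FF K) (pderiv (Var.ubar 0) F) * DbarF g
    - algebraMap (RR K) (FF K) (pderiv (Var.u 0) F) * g = 0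

set_option linter.unusedSectionVars false
section MyAux

variable {K : Type*} [Field K] [CharZero K]

lemma totalDer_comm {F : RR K} {D Dbar : Derivation K (RR K) (RR K)}
    (h : IsTotalDerPair F D Dbar) (p : RR K) : D (Dbar p) = Dbar (D p) := by
  have hz : (⁅D, Dbar⁆ : Derivation K (RR K) (RR K)) = 0 := by
    apply MvPolynomial.derivation_ext
    intro v
    rw [Derivation.commutator_apply]
    show _ - _ = (0 : Derivation K (RR K) (RR K)) (X v)
    rw [Derivation.zero_apply, sub_eq_zero]
    cases v with
    | x => simp [h.hDx, h.hDbarx]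
    | y => simp [h.hDy, h.hDbary]
    | u i =>
      cases i with
      | zero =>
        rw [h.hDbaru0, h.hDu]
        have h1 : D (X (Var.ubar 0)) = F := by simpa using h.hDubar 0
        have h2 : Dbar (X (Var.u 1)) = F := by simpa using h.hDbaru 0
        rw [h1, h2]
      | succ i =>
        rw [h.hDbaru i, h.hDu, h.hDbaru (i + 1), Function.iterate_succ_apply']
    | ubar j =>
      rw [h.hDbarubar j, h.hDubar j, h.hDubar (j + 1), Function.iterate_succ_apply']
  have h2 := congrArg (fun E : Derivation K (RR K) (RR K) => E p) hz
  simp only [Derivation.commutator_apply, Derivation.zero_apply] at h2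
  exact sub_eq_zero.mp h2

lemma ff_deriv_eq_zero {E : Derivation K (FF K) (FF K)}
    (h : ∀ p : RR K, E (algebraMap (RR K) (FF K) p) = 0) (z : FF K) : E z = 0 := by
  obtain ⟨p, q, hq, rfl⟩ := IsFractionRing.div_surjective (A := RR K) z
  rw [Derivation.leibniz_div, h, h]
  simp

lemma ff_comm {F : RR K} {D Dbar : Derivation K (RR K) (RR K)}
    (h : IsTotalDerPair F D Dbar) {DF DbarF : Derivation K (FF K) (FF K)}
    (hDF : ExtendsTo D DF) (hDbarF : ExtendsTo Dbar DbarF) (z : FF K) :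
    DF (DbarF z) = DbarF (DF z) := by
  have h0 : ∀ p : RR K,
      (⁅DF, DbarF⁆ : Derivation K (FF K) (FF K)) (algebraMap (RR K) (FF K) p) = 0 := by
    intro p
    rw [Derivation.commutator_apply, hDbarF p, hDF (Dbar p), hDF p, hDbarF (D p),
      totalDer_comm h p, sub_self]
  have h2 := ff_deriv_eq_zero h0 z
  rw [Derivation.commutator_apply] at h2
  exact sub_eq_zero.mp h2

lemma deriv_prod_logd (Dv : Derivation K (FF K) (FF K)) (H : ℕ → FF K) :
    ∀ (s : Finset ℕ), (∀ i ∈ s, H i ≠ 0) →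
      Dv (∏ i ∈ s, H i) = (∑ i ∈ s, Dv (H i) / H i) * ∏ i ∈ s, H i := by
  intro s
  induction s using Finset.induction_on with
  | empty => intro _; simp
  | insert x s hx ih =>
    intro hs
    have hx0 : H x ≠ 0 := hs x (Finset.mem_insert_self x s)
    rw [Finset.prod_insert hx, Finset.sum_insert hx, Derivation.leibniz,
      ih (fun i hi => hs i (Finset.mem_insert_of_mem hi))]
    simp only [smul_eq_mul]
    field_simp
    ring

/-- The inner-to-outer sequence of the Laplace cascade. -/
def qSeq {L : Type*} [Field L] (Df : L → L) (bb : L) (H : ℕ → L) (n : ℕ) (x0 : L) : ℕ → L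
  | 0 => x0
  | (m + 1) => (Df (qSeq Df bb H n x0 m) - bb * qSeq Df bb H n x0 m) / H (n - m)

def ppSeq {L : Type*} [Field L] (Df : L → L) (bb : L) (H : ℕ → L) (n : ℕ) (x0 : L) : ℕ → L
  | 0 => 0
  | (m + 1) => qSeq Df bb H n x0 m

def chainC {L : Type*} [Field L] (Df : L → L) (c : L) (H : ℕ → L) : ℕ → L → L
  | 0, x => x
  | (j + 1), x => chainC Df c H j ((Df x - c * x) / H (j + 1))

def Aseq {L : Type*} [Field L] (Dbarf : L → L) (H : ℕ → L) (a0 : L) (k : ℕ) : L :=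
  a0 + ∑ i ∈ Finset.Icc 1 k, Dbarf (H i) / H i

lemma lapAux_eq_chain (Df : FF K → FF K) (c : FF K) (H : ℕ → FF K) :
    ∀ (j : ℕ) (g : FF K → FF K) (a : FF K), lapAux Df c H j g a = chainC Df c H j (g a) := by
  intro j
  induction j with
  | zero => intro g a; rfl
  | succ j ih =>
    intro g a
    show lapAux Df c H j _ a = _
    rw [ih]
    rfl

lemma chain_qSeq {L : Type*} [Field L] (Df : L → L) (bb : L) (H : ℕ → L) (n : ℕ) (x0 : L) :
    ∀ (j m : ℕ), j + m = n →
      chainC Df bb H j (qSeq Df bb H n x0 m) = qSeq Df bb H n x0 n := by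
  intro j
  induction j with
  | zero =>
    intro m hm
    have h0 : m = n := by omega
    subst h0
    rfl
  | succ j ih =>
    intro m hm
    show chainC Df bb H j _ = _
    have h1 : j + 1 = n - m := by omega
    rw [h1]
    have h2 : (Df (qSeq Df bb H n x0 m) - bb * qSeq Df bb H n x0 m) / H (n - m)
        = qSeq Df bb H n x0 (m + 1) := rfl
    rw [h2]
    exact ih (m + 1) (by omega)

end MyAux

set_option maxHeartbeats 1000000 in
set_option synthInstance.maxHeartbeats 400000 in
theorem statement7
    (F : RR K) (hF : F ∈ MvPolynomial.supported K Fvars)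
    (D Dbar : Derivation K (RR K) (RR K)) (hDD : IsTotalDerPair F D Dbar)
    (DF DbarF : Derivation K (FF K) (FF K))
    (hDF : ExtendsTo D DF) (hDbarF : ExtendsTo Dbar DbarF)
    (H : ℕ → FF K)
    (hH : H = Hseq ⇑DF ⇑DbarF (algebraMap (RR K) (FF K) (H0R F Dbar))
      (algebraMap (RR K) (FF K) (H1R F D)))
    (ψ : RR K) (hψ0 : ψ ≠ 0) (hψ : Dbar ψ = pderiv (Var.u 1) F * ψ)
    (r : ℕ) (hr : 1 ≤ r) (hHr : H r = 0)
    (hHnz : ∀ i : ℕ, 1 ≤ i → i < r → H i ≠ 0) :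
    ∀ W : RR K, Dbar W = 0 →
      IsSymmetryFF F DF DbarF
        (lapM ⇑DF (algebraMap (RR K) (FF K) (pderiv (Var.ubar 0) F)) H
          (algebraMap (RR K) (FF K) ψ) r (algebraMap (RR K) (FF K) W)) := by
  intro W hW
  obtain ⟨n, rfl⟩ : ∃ n, r = n + 1 := ⟨r - 1, by omega⟩
  set φ := algebraMap (RR K) (FF K) with hφ
  set aF := φ (pderiv (Var.u 1) F) with haF
  set bF := φ (pderiv (Var.ubar 0) F) with hbF
  set cF := φ (pderiv (Var.u 0) F) with hcF
  set ψ' := φ ψ with hψ'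
  set W' := φ W with hW'
  have ffc : ∀ z : FF K, DF (DbarF z) = DbarF (DF z) := ff_comm hDD hDF hDbarF
  have hrec : ∀ j : ℕ, H (j + 2)
      = 2 * H (j + 1) - H j - DF (DbarF (H (j + 1)) / H (j + 1)) := by
    intro j; rw [hH]; rfl
  have hH0 : H 0 = φ (H0R F Dbar) := by rw [hH]; rfl
  have hH1 : H 1 = φ (H1R F D) := by rw [hH]; rfl
  -- the key identity for the shifted coefficients
  have idI : ∀ k : ℕ, DF (Aseq ⇑DbarF H aF k) - DbarF bF = H k - H (k + 1) := by
    intro k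
    induction k with
    | zero =>
      rw [Aseq, Finset.Icc_eq_empty (by omega : ¬ (1:ℕ) ≤ 0), Finset.sum_empty, add_zero,
        hH0, hH1, haF, hbF, hDF, hDbarF]
      simp only [H0R, H1R, map_add, map_neg, map_mul]
      ring
    | succ k ih =>
      have hs : Aseq ⇑DbarF H aF (k + 1)
          = Aseq ⇑DbarF H aF k + DbarF (H (k + 1)) / H (k + 1) := by
        rw [Aseq, Aseq, Finset.sum_Icc_succ_top (by omega : 1 ≤ k + 1)]
        ring
      have h3 : DF (DbarF (H (k + 1)) / H (k + 1)) = 2 * H (k + 1) - H k - H (k + 2) := by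
        linear_combination hrec k
      rw [hs, map_add, h3]
      linear_combination ih
  -- the cascade sequence
  set x0 : FF K := (∏ i ∈ Finset.Icc 1 n, H i) * ψ' * W' with hx0
  have q0 : qSeq ⇑DF bF H n x0 0 = x0 := rfl
  have qsucc : ∀ m : ℕ, qSeq ⇑DF bF H n x0 (m + 1)
      = (DF (qSeq ⇑DF bF H n x0 m) - bF * qSeq ⇑DF bF H n x0 m) / H (n - m) := fun _ => rfl
  have pp0 : ppSeq ⇑DF bF H n x0 0 = 0 := rfl
  have ppsucc : ∀ m : ℕ, ppSeq ⇑DF bF H n x0 (m + 1) = qSeq ⇑DF bF H n x0 m := fun _ => rfl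
  have inv2 : ∀ m k : ℕ, m + k = n →
      DF (ppSeq ⇑DF bF H n x0 m) - bF * ppSeq ⇑DF bF H n x0 m
        = H (k + 1) * qSeq ⇑DF bF H n x0 m := by
    intro m k hk
    cases m with
    | zero =>
      have hkn : k = n := by omega
      subst hkn
      rw [pp0, hHr, map_zero]
      ring
    | succ m =>
      have hnm : n - m = k + 1 := by omega
      have hq1 : qSeq ⇑DF bF H n x0 (m + 1)
          = (DF (qSeq ⇑DF bF H n x0 m) - bF * qSeq ⇑DF bF H n x0 m) / H (k + 1) := by
        rw [qsucc m, hnm]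
      have hHk : H (k + 1) ≠ 0 := hHnz (k + 1) (by omega) (by omega)
      rw [ppsucc, hq1]
      field_simp
  have hSprod : DbarF (∏ i ∈ Finset.Icc 1 n, H i)
      = (∑ i ∈ Finset.Icc 1 n, DbarF (H i) / H i) * ∏ i ∈ Finset.Icc 1 n, H i :=
    deriv_prod_logd DbarF H _ (fun i hi => by
      have h1 := (Finset.mem_Icc.mp hi).1
      have h2 := (Finset.mem_Icc.mp hi).2
      exact hHnz i h1 (by omega))
  have hWd : DbarF W' = 0 := by rw [hW', hDbarF, hW, map_zero]
  have hψd : DbarF ψ' = aF * ψ' := by rw [hψ', hDbarF, hψ, map_mul]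
  have inv1 : ∀ m k : ℕ, m + k = n →
      DbarF (qSeq ⇑DF bF H n x0 m)
        = Aseq ⇑DbarF H aF k * qSeq ⇑DF bF H n x0 m + ppSeq ⇑DF bF H n x0 m := by
    intro m
    induction m with
    | zero =>
      intro k hk
      have hkn : k = n := by omega
      subst hkn
      rw [q0, pp0, hx0, Derivation.leibniz, Derivation.leibniz, hSprod, hWd, hψd, Aseq]
      simp only [smul_eq_mul]
      ring
    | succ m ih =>
      intro k hk
      have ihm := ih (k + 1) (by omega)
      have i2' : DF (ppSeq ⇑DF bF H n x0 m)
          = bF * ppSeq ⇑DF bF H n x0 m + H (k + 2) * qSeq ⇑DF bF H n x0 m := by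
        linear_combination inv2 m (k + 1) (by omega)
      have hHk : H (k + 1) ≠ 0 := hHnz _ (by omega) (by omega)
      have hnm : n - m = k + 1 := by omega
      have hq1 : qSeq ⇑DF bF H n x0 (m + 1)
          = (DF (qSeq ⇑DF bF H n x0 m) - bF * qSeq ⇑DF bF H n x0 m) / H (k + 1) := by
        rw [qsucc m, hnm]
      have hc4 : DbarF (DF (qSeq ⇑DF bF H n x0 m))
          = DF (DbarF (qSeq ⇑DF bF H n x0 m)) := (ffc _).symm
      have idI' : DF (Aseq ⇑DbarF H aF (k + 1))
          = DbarF bF + H (k + 1) - H (k + 2) := by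
        linear_combination idI (k + 1)
      have e2 : DbarF (DF (qSeq ⇑DF bF H n x0 m) - bF * qSeq ⇑DF bF H n x0 m)
          = Aseq ⇑DbarF H aF (k + 1)
              * (DF (qSeq ⇑DF bF H n x0 m) - bF * qSeq ⇑DF bF H n x0 m)
            + H (k + 1) * qSeq ⇑DF bF H n x0 m := by
        rw [map_sub, hc4, ihm, map_add, Derivation.leibniz, Derivation.leibniz, ihm,
          i2', idI']
        simp only [smul_eq_mul]
        ring
      have hA : Aseq ⇑DbarF H aF k
          = Aseq ⇑DbarF H aF (k + 1) - DbarF (H (k + 1)) / H (k + 1) := by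
        rw [Aseq, Aseq, Finset.sum_Icc_succ_top (by omega : 1 ≤ k + 1)]
        ring
      rw [hq1, ppsucc, Derivation.leibniz_div, e2, hA]
      simp only [smul_eq_mul]
      field_simp
      ring
  -- final assembly
  have hres : lapM ⇑DF bF H ψ' (n + 1) W' = qSeq ⇑DF bF H n x0 n := by
    rw [lapM]
    simp only [Nat.add_sub_cancel]
    rw [lapAux_eq_chain]
    exact chain_qSeq ⇑DF bF H n x0 n 0 (by omega)
  rw [IsSymmetryFF, hres]
  have f1 := inv1 n 0 (by omega)
  have f2' : DF (ppSeq ⇑DF bF H n x0 n)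
      = bF * ppSeq ⇑DF bF H n x0 n + H 1 * qSeq ⇑DF bF H n x0 n := by
    linear_combination inv2 n 0 (by omega)
  have hA0 : Aseq ⇑DbarF H aF 0 = aF := by
    rw [Aseq, Finset.Icc_eq_empty (by omega : ¬ (1:ℕ) ≤ 0), Finset.sum_empty, add_zero]
  rw [hA0] at f1
  have e3 : H 1 = -(DF aF) + aF * bF + cF := by
    rw [hH1, haF, hbF, hcF, hDF]
    simp only [H1R, map_add, map_neg, map_mul]
    rfl
  rw [f1, map_add, Derivation.leibniz, f2', e3]
  simp only [smul_eq_mul]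
  ring
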